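/- Let (a_n)_{n∈ℤ} be a real sequence with a_n > 0 and (b_n)_{n∈ℤ} a real sequence, and define b_n^± = b_n ± (|a_{n−1} − 1| + |a_n − 1|). Then for every finitely supported complex sequence u on ℤ: ∑_{n∈ℤ} ( u(n−1) + b_n^− u(n) + u(n+1) ) · conj(u(n)) ≤ ∑_{n∈ℤ} ( a_{n−1} u(n−1) + b_n u(n) + a_n u(n+1) ) · conj(u(n)) ≤ ∑_{n∈ℤ} ( u(n−1) + b_n^+ u(n) + u(n+1) ) · conj(u(n)), where all three sums are real. In other words, in the sense of quadratic forms, W({a_n ≡ 1}, {b_n^−}) ≤ W({a_n}, {b_n}) ≤ W({a_n ≡ 1}, {b_n^+}). -/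

import Mathlib

open Complex

private lemma st11_summable0 {E : Type*} [AddCommMonoid E] [TopologicalSpace E]
    (u : ℤ → ℂ) (hu : (Function.support u).Finite) (F : ℤ → E)
    (h : ∀ n, u n = 0 → F n = 0) : Summable F := by
  apply summable_of_finite_support
  apply hu.subset
  intro n hn
  simp only [Function.mem_support] at hn ⊢
  exact fun h0 => hn (h n h0)

private lemma st11_summable1 {E : Type*} [AddCommMonoid E] [TopologicalSpace E]
    (u : ℤ → ℂ) (hu : (Function.support u).Finite) (F : ℤ → E)
    (h : ∀ n, u (n + 1) = 0 → F n = 0) : Summable F := by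
  apply summable_of_finite_support
  apply ((hu.image (fun n => n - 1))).subset
  intro n hn
  simp only [Function.mem_support] at hn
  exact ⟨n + 1, fun h0 => hn (h n h0), by ring⟩

private lemma st11_shift {M : Type*} [AddCommMonoid M] [TopologicalSpace M] (f : ℤ → M) :
    ∑' n : ℤ, f (n + 1) = ∑' n : ℤ, f n :=
  (Equiv.addRight (1 : ℤ)).tsum_eq f

private lemma st11_main (c d : ℤ → ℝ) (u : ℤ → ℂ) (hu : (Function.support u).Finite) :
    (∑' n : ℤ, ((c (n - 1) : ℂ) * u (n - 1) + (d n : ℂ) * u n + (c n : ℂ) * u (n + 1)) *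
        (starRingEnd ℂ) (u n)) =
      ((∑' n : ℤ, (c n * (2 * (u (n + 1) * (starRingEnd ℂ) (u n)).re) +
          d n * Complex.normSq (u n)) : ℝ) : ℂ) := by
  set A : ℤ → ℂ := fun n => (c (n - 1) : ℂ) * (u (n - 1) * (starRingEnd ℂ) (u n)) with hA
  set B : ℤ → ℂ := fun n => (d n : ℂ) * (u n * (starRingEnd ℂ) (u n)) with hB
  set C : ℤ → ℂ := fun n => (c n : ℂ) * (u (n + 1) * (starRingEnd ℂ) (u n)) with hC
  set A' : ℤ → ℂ := fun n => (c n : ℂ) * (u n * (starRingEnd ℂ) (u (n + 1))) with hA'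
  have sA : Summable A := st11_summable0 u hu A (fun n h0 => by simp [hA, h0])
  have sB : Summable B := st11_summable0 u hu B (fun n h0 => by simp [hB, h0])
  have sC : Summable C := st11_summable0 u hu C (fun n h0 => by simp [hC, h0])
  have sA' : Summable A' := st11_summable0 u hu A' (fun n h0 => by simp [hA', h0])
  have hshiftA : ∑' n, A n = ∑' n, A' n := by
    rw [← st11_shift A]
    apply tsum_congr
    intro n
    simp only [hA, hA', add_sub_cancel_right]
  have step1 : (∑' n : ℤ, ((c (n - 1) : ℂ) * u (n - 1) + (d n : ℂ) * u n + (c n : ℂ) * u (n + 1)) *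
      (starRingEnd ℂ) (u n)) = ∑' n, (A n + B n + C n) :=
    tsum_congr (fun n => by simp only [hA, hB, hC]; ring)
  have hAC : ∀ n : ℤ, A' n + C n =
      ((c n * (2 * (u (n + 1) * (starRingEnd ℂ) (u n)).re) : ℝ) : ℂ) := by
    intro n
    have hz : u n * (starRingEnd ℂ) (u (n + 1)) =
        (starRingEnd ℂ) (u (n + 1) * (starRingEnd ℂ) (u n)) := by
      rw [map_mul, Complex.conj_conj]; ring
    have : A' n + C n = (c n : ℂ) *
        (u (n + 1) * (starRingEnd ℂ) (u n) + (starRingEnd ℂ) (u (n + 1) * (starRingEnd ℂ) (u n))) := by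
      simp only [hA', hC]; rw [hz]; ring
    rw [this, Complex.add_conj]
    push_cast
    ring
  have hB2 : ∀ n : ℤ, B n = ((d n * Complex.normSq (u n) : ℝ) : ℂ) := by
    intro n
    simp only [hB]; rw [Complex.mul_conj]
    push_cast
    ring
  rw [step1, Summable.tsum_add (sA.add sB) sC, Summable.tsum_add sA sB, hshiftA, add_right_comm,
    ← Summable.tsum_add sA' sC, ← Summable.tsum_add (sA'.add sC) sB, Complex.ofReal_tsum]
  apply tsum_congr
  intro n
  rw [hAC n, hB2 n]
  push_cast
  ring

private lemma st11_ptwise (c : ℝ) (x y : ℂ) :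
    0 ≤ c * (2 * (y * (starRingEnd ℂ) x).re) + (|c| * Complex.normSq x + |c| * Complex.normSq y) := by
  have h1 : |(y * (starRingEnd ℂ) x).re| ≤ ‖y‖ * ‖x‖ := by
    calc |(y * (starRingEnd ℂ) x).re| ≤ ‖y * (starRingEnd ℂ) x‖ :=
          Complex.abs_re_le_norm _
      _ = ‖y‖ * ‖x‖ := by rw [norm_mul, Complex.norm_conj]
  have h2 : Complex.normSq x = ‖x‖ ^ 2 := (Complex.sq_norm x).symm
  have h3 : Complex.normSq y = ‖y‖ ^ 2 := (Complex.sq_norm y).symm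
  have h4 : -(c * (2 * (y * (starRingEnd ℂ) x).re)) ≤ |c| * (2 * (‖y‖ * ‖x‖)) := by
    calc -(c * (2 * (y * (starRingEnd ℂ) x).re)) ≤ |c * (2 * (y * (starRingEnd ℂ) x).re)| :=
          neg_le_abs _
      _ = |c| * (2 * |(y * (starRingEnd ℂ) x).re|) := by
          rw [abs_mul, abs_mul]
          norm_num
      _ ≤ |c| * (2 * (‖y‖ * ‖x‖)) := by
          apply mul_le_mul_of_nonneg_left _ (abs_nonneg c)
          linarith
  nlinarith [sq_nonneg (‖x‖ - ‖y‖), abs_nonneg c]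

private lemma st11_pos (c : ℤ → ℝ) (u : ℤ → ℂ) (hu : (Function.support u).Finite) :
    0 ≤ ∑' n : ℤ, (c n * (2 * (u (n + 1) * (starRingEnd ℂ) (u n)).re) +
        (|c (n - 1)| + |c n|) * Complex.normSq (u n)) := by
  set K : ℤ → ℝ := fun n => c n * (2 * (u (n + 1) * (starRingEnd ℂ) (u n)).re) +
      |c n| * Complex.normSq (u n) with hK
  set L : ℤ → ℝ := fun n => |c (n - 1)| * Complex.normSq (u n) with hL
  set L' : ℤ → ℝ := fun n => |c n| * Complex.normSq (u (n + 1)) with hL'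
  have sK : Summable K := st11_summable0 u hu K (fun n h0 => by simp [hK, h0])
  have sL : Summable L := st11_summable0 u hu L (fun n h0 => by simp [hL, h0])
  have sL' : Summable L' := st11_summable1 u hu L' (fun n h0 => by simp [hL', h0])
  have hshiftL : ∑' n, L n = ∑' n, L' n := by
    rw [← st11_shift L]
    apply tsum_congr
    intro n
    simp only [hL, hL', add_sub_cancel_right]
  have step : (∑' n : ℤ, (c n * (2 * (u (n + 1) * (starRingEnd ℂ) (u n)).re) +
      (|c (n - 1)| + |c n|) * Complex.normSq (u n))) = ∑' n, (K n + L n) :=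
    tsum_congr (fun n => by simp only [hK, hL]; ring)
  rw [step, Summable.tsum_add sK sL, hshiftL, ← Summable.tsum_add sK sL']
  apply tsum_nonneg
  intro n
  have := st11_ptwise (c n) (u n) (u (n + 1))
  simp only [hK, hL']
  linarith

theorem stmt_11
    (a b : ℤ → ℝ) (ha : ∀ n, 0 < a n)
    (u : ℤ → ℂ) (hu : (Function.support u).Finite) :
    let bm : ℤ → ℝ := fun n => b n - (|a (n - 1) - 1| + |a n - 1|)
    let bp : ℤ → ℝ := fun n => b n + (|a (n - 1) - 1| + |a n - 1|)
    let S₁ : ℂ := ∑' n : ℤ, (u (n - 1) + (bm n : ℂ) * u n + u (n + 1)) * (starRingEnd ℂ) (u n)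
    let S₂ : ℂ := ∑' n : ℤ,
      ((a (n - 1) : ℂ) * u (n - 1) + (b n : ℂ) * u n + (a n : ℂ) * u (n + 1)) * (starRingEnd ℂ) (u n)
    let S₃ : ℂ := ∑' n : ℤ, (u (n - 1) + (bp n : ℂ) * u n + u (n + 1)) * (starRingEnd ℂ) (u n)
    S₁.im = 0 ∧ S₂.im = 0 ∧ S₃.im = 0 ∧ S₁.re ≤ S₂.re ∧ S₂.re ≤ S₃.re := by
  intro bm bp S₁ S₂ S₃
  have hbm : ∀ n, bm n = b n - (|a (n - 1) - 1| + |a n - 1|) := fun n => rfl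
  have hbp : ∀ n, bp n = b n + (|a (n - 1) - 1| + |a n - 1|) := fun n => rfl
  have e₁ : S₁ = ((∑' n : ℤ, ((1 : ℝ) * (2 * (u (n + 1) * (starRingEnd ℂ) (u n)).re) +
      bm n * Complex.normSq (u n)) : ℝ) : ℂ) := by
    refine Eq.trans (tsum_congr fun n => ?_) (st11_main (fun _ => (1 : ℝ)) bm u hu)
    push_cast
    ring
  have e₂ : S₂ = ((∑' n : ℤ, (a n * (2 * (u (n + 1) * (starRingEnd ℂ) (u n)).re) +
      b n * Complex.normSq (u n)) : ℝ) : ℂ) := st11_main a b u hu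
  have e₃ : S₃ = ((∑' n : ℤ, ((1 : ℝ) * (2 * (u (n + 1) * (starRingEnd ℂ) (u n)).re) +
      bp n * Complex.normSq (u n)) : ℝ) : ℂ) := by
    refine Eq.trans (tsum_congr fun n => ?_) (st11_main (fun _ => (1 : ℝ)) bp u hu)
    push_cast
    ring
  -- summability of the real summands
  have s₁ : Summable (fun n : ℤ => (1 : ℝ) * (2 * (u (n + 1) * (starRingEnd ℂ) (u n)).re) +
      bm n * Complex.normSq (u n)) :=
    st11_summable0 u hu _ (fun n h0 => by simp [h0])
  have s₂ : Summable (fun n : ℤ => a n * (2 * (u (n + 1) * (starRingEnd ℂ) (u n)).re) +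
      b n * Complex.normSq (u n)) :=
    st11_summable0 u hu _ (fun n h0 => by simp [h0])
  have s₃ : Summable (fun n : ℤ => (1 : ℝ) * (2 * (u (n + 1) * (starRingEnd ℂ) (u n)).re) +
      bp n * Complex.normSq (u n)) :=
    st11_summable0 u hu _ (fun n h0 => by simp [h0])
  have sD : Summable (fun n : ℤ => (a n - 1) * (2 * (u (n + 1) * (starRingEnd ℂ) (u n)).re) +
      (|(a (n - 1) - 1)| + |a n - 1|) * Complex.normSq (u n)) :=
    st11_summable0 u hu _ (fun n h0 => by simp [h0])
  have sD' : Summable (fun n : ℤ => (1 - a n) * (2 * (u (n + 1) * (starRingEnd ℂ) (u n)).re) +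
      (|(a (n - 1) - 1)| + |a n - 1|) * Complex.normSq (u n)) :=
    st11_summable0 u hu _ (fun n h0 => by simp [h0])
  have ie1 : (∑' n : ℤ, ((1 : ℝ) * (2 * (u (n + 1) * (starRingEnd ℂ) (u n)).re) +
      bm n * Complex.normSq (u n))) ≤
      ∑' n : ℤ, (a n * (2 * (u (n + 1) * (starRingEnd ℂ) (u n)).re) +
      b n * Complex.normSq (u n)) := by
    have split : (∑' n : ℤ, (a n * (2 * (u (n + 1) * (starRingEnd ℂ) (u n)).re) +
        b n * Complex.normSq (u n))) =
        (∑' n : ℤ, ((1 : ℝ) * (2 * (u (n + 1) * (starRingEnd ℂ) (u n)).re) +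
          bm n * Complex.normSq (u n))) +
        ∑' n : ℤ, ((a n - 1) * (2 * (u (n + 1) * (starRingEnd ℂ) (u n)).re) +
          (|(a (n - 1) - 1)| + |a n - 1|) * Complex.normSq (u n)) := by
      rw [← Summable.tsum_add s₁ sD]
      apply tsum_congr
      intro n
      rw [hbm n]
      ring
    rw [split]
    have := st11_pos (fun n => a n - 1) u hu
    refine le_add_of_nonneg_right ?_
    exact this
  have ie2 : (∑' n : ℤ, (a n * (2 * (u (n + 1) * (starRingEnd ℂ) (u n)).re) +
      b n * Complex.normSq (u n))) ≤
      ∑' n : ℤ, ((1 : ℝ) * (2 * (u (n + 1) * (starRingEnd ℂ) (u n)).re) +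
      bp n * Complex.normSq (u n)) := by
    have split : (∑' n : ℤ, ((1 : ℝ) * (2 * (u (n + 1) * (starRingEnd ℂ) (u n)).re) +
        bp n * Complex.normSq (u n))) =
        (∑' n : ℤ, (a n * (2 * (u (n + 1) * (starRingEnd ℂ) (u n)).re) +
          b n * Complex.normSq (u n))) +
        ∑' n : ℤ, ((1 - a n) * (2 * (u (n + 1) * (starRingEnd ℂ) (u n)).re) +
          (|(a (n - 1) - 1)| + |a n - 1|) * Complex.normSq (u n)) := by
      rw [← Summable.tsum_add s₂ sD']
      apply tsum_congr
      intro n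
      rw [hbp n]
      ring
    rw [split]
    have h0 := st11_pos (fun n => 1 - a n) u hu
    refine le_add_of_nonneg_right ?_
    refine le_trans h0 (le_of_eq ?_)
    apply tsum_congr
    intro n
    rw [show |1 - a (n - 1)| = |a (n - 1) - 1| from abs_sub_comm _ _,
      show |1 - a n| = |a n - 1| from abs_sub_comm _ _]
  refine ⟨by rw [e₁]; exact Complex.ofReal_im _,
    by rw [e₂]; exact Complex.ofReal_im _,
    by rw [e₃]; exact Complex.ofReal_im _,
    ?_, ?_⟩
  · rw [e₁, e₂, Complex.ofReal_re, Complex.ofReal_re]; exact ie1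
  · rw [e₂, e₃, Complex.ofReal_re, Complex.ofReal_re]; exact ie2
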